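/- Fix h, g, σ₁², σ₂² > 0 with hσ₂² > gσ₁², and fix p > 0. Define R(α) = log₂(1 + (1-α)hp/σ₁²) - log₂(1 + (1-α)gp/(αgp + σ₂²)) on [0,1]. Then for x = σ₁²/(hp) - σ₂²/(gp) (which satisfies x < 0), the maximizer α* = max(0, min(1, 1/2 + x/2)) satisfies R(α*) ≥ R(0); i.e., using artificial noise never decreases the secrecy rate when it can be cancelled at the IR. -/

import Mathlib

theorem stmt_9 (h g p σ1 σ2 : ℝ) (hh : 0 < h) (hg : 0 < g) (hp : 0 < p)
    (hσ1 : 0 < σ1) (hσ2 : 0 < σ2)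
    (hdom : h * σ2 > g * σ1)
    (x : ℝ) (hx : x = σ1 / (h * p) - σ2 / (g * p))
    (R : ℝ → ℝ)
    (hR : R = fun α => Real.logb 2 (1 + (1 - α) * h * p / σ1)
      - Real.logb 2 (1 + (1 - α) * g * p / (α * g * p + σ2))) :
    x < 0 ∧ R (max 0 (min 1 (1 / 2 + x / 2))) ≥ R 0 := by
  have hhp : (0:ℝ) < h * p := by positivity
  have hgp : (0:ℝ) < g * p := by positivity
  have hx0 : x < 0 := by
    rw [hx, sub_neg, div_lt_div_iff₀ hhp hgp]
    nlinarith
  refine ⟨hx0, ?_⟩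
  by_cases hc : 1 / 2 + x / 2 ≤ 0
  · have hm : max 0 (min 1 (1 / 2 + x / 2)) = 0 := by
      rw [min_eq_right (by linarith), max_eq_left hc]
    rw [hm]
  · push_neg at hc
    have hα1 : 1 / 2 + x / 2 < 1 := by linarith
    have hm : max 0 (min 1 (1 / 2 + x / 2)) = 1 / 2 + x / 2 := by
      rw [min_eq_right hα1.le, max_eq_right hc.le]
    rw [hm, hR]
    set α : ℝ := 1 / 2 + x / 2 with hαdef
    clear_value α
    rw [hαdef] at hc hα1 ⊢
    rw [← hαdef] at hc hα1 ⊢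
    have h1 : σ1 * (g * p) - σ2 * (h * p) = h * p * (g * p) * x := by
      rw [hx]; field_simp
    have key : (σ1 + h * p) * σ2 ≤ (σ1 + (1 - α) * h * p) * (α * g * p + σ2) := by
      have heq : (σ1 + (1 - α) * h * p) * (α * g * p + σ2) - (σ1 + h * p) * σ2
          = h * p * (g * p) * (1 + x) ^ 2 / 4 := by
        rw [hαdef]; linear_combination ((1 + x) / 2) * h1
      have hr : (0:ℝ) ≤ h * p * (g * p) * (1 + x) ^ 2 / 4 := by positivity
      linarith
    have hden : (0:ℝ) < α * g * p + σ2 := by nlinarith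
    have h1α : (0:ℝ) < 1 - α := by linarith
    simp only []
    have e0 : (1:ℝ) - 0 = 1 := by norm_num
    -- rewrite the terms as ratios
    have A1 : 1 + (1 - α) * h * p / σ1 = (σ1 + (1 - α) * h * p) / σ1 := by
      field_simp
    have A2 : 1 + (1 - (0:ℝ)) * h * p / σ1 = (σ1 + h * p) / σ1 := by
      field_simp; norm_num
    have B1 : 1 + (1 - α) * g * p / (α * g * p + σ2)
        = (g * p + σ2) / (α * g * p + σ2) := by
      field_simp; ring
    have B2 : 1 + (1 - (0:ℝ)) * g * p / ((0:ℝ) * g * p + σ2) = (g * p + σ2) / σ2 := by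
      field_simp; ring
    rw [A1, A2, B1, B2]
    rw [ge_iff_le, sub_le_sub_iff]
    rw [← Real.logb_mul (by positivity) (by positivity),
        ← Real.logb_mul (by positivity) (by positivity)]
    apply Real.logb_le_logb_of_le (by norm_num) (by positivity)
    rw [div_mul_div_comm, div_mul_div_comm, div_le_div_iff₀ (by positivity) (by positivity)]
    nlinarith [mul_le_mul_of_nonneg_left key (le_of_lt (show (0:ℝ) < g * p + σ2 by positivity)), mul_pos hσ1 hσ2, mul_pos hden hσ1]
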